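/- Let α be irrational with denominators (q_n) and β real. If there exists n₀ such that ‖q_n β‖ ≤ (1/4) q_n ‖q_n α‖ for all n ≥ n₀, then β ∈ ℤα + ℤ. -/

import Mathlib

/-- Denominators of the continued fraction convergents of a real number. -/
noncomputable def contDen (α : ℝ) (n : ℕ) : ℝ := (GenContFract.of α).dens n

/-- Distance from a real number to the nearest integer. -/
noncomputable def nint (x : ℝ) : ℝ := |x - (round x : ℝ)|

/-- `α` is of bounded type: the partial quotients in its continued fraction expansion
are bounded. -/
def BoundedType (α : ℝ) : Prop :=
  ∃ M : ℝ, ∀ n : ℕ, ∀ b : ℝ, (GenContFract.of α).partDens.get? n = some b → b ≤ M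

/-- Membership in the subgroup ℤα + ℤ of ℝ. -/
def InZalphaZ (α β : ℝ) : Prop := ∃ m k : ℤ, β = (m : ℝ) * α + (k : ℝ)

open GenContFract

/-- The core arithmetic lemma. -/
lemma key_lemma (α β : ℝ) (q p : ℕ → ℝ) (Q P : ℕ → ℤ)
    (hQ : ∀ n, q n = (Q n : ℝ)) (hP : ∀ n, p n = (P n : ℝ))
    (hq1 : ∀ n, (1:ℝ) ≤ q n)
    (hmono : ∀ n, q n ≤ q (n+1))
    (hfib : ∀ n : ℕ, (n : ℝ) ≤ q (n + 5))
    (hdet : ∀ n, p n * q (n+1) - q n * p (n+1) = 1 ∨ p n * q (n+1) - q n * p (n+1) = -1)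
    (he : ∀ n, |q n * α - p n| * q (n+1) < 1)
    (hD : ∀ n, |q n * β - (round (q n * β) : ℝ)| ≤ (1/4) * q n * |q n * α - p n|) :
    InZalphaZ α β := by
  have hqpos : ∀ n, (0:ℝ) < q n := fun n => lt_of_lt_of_le one_pos (hq1 n)
  -- integer sequences
  set σ : ℕ → ℤ := fun n => P n * Q (n+1) - Q n * P (n+1) with hσdef
  set r : ℕ → ℤ := fun n => round (q n * β) with hrdef
  set m : ℕ → ℤ := fun n => σ n * (r n * Q (n+1) - Q n * r (n+1)) with hmdef
  set k : ℕ → ℤ := fun n => σ n * (P n * r (n+1) - r n * P (n+1)) with hkdef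
  have hσ1 : ∀ n, σ n = 1 ∨ σ n = -1 := by
    intro n
    rcases hdet n with hd | hd
    · left
      have : ((σ n : ℤ) : ℝ) = 1 := by
        simp only [hσdef]; push_cast; rw [← hP n, ← hP (n+1), ← hQ n, ← hQ (n+1)]; linarith
      exact_mod_cast this
    · right
      have : ((σ n : ℤ) : ℝ) = -1 := by
        simp only [hσdef]; push_cast; rw [← hP n, ← hP (n+1), ← hQ n, ← hQ (n+1)]; linarith
      exact_mod_cast this
  have hσ2 : ∀ n, (σ n) * (σ n) = 1 := by
    intro n; rcases hσ1 n with h | h <;> rw [h] <;> norm_num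
  have hσabs : ∀ n, |((σ n : ℤ) : ℝ)| = 1 := by
    intro n; rcases hσ1 n with h | h <;> rw [h] <;> norm_num
  -- the linear solves
  have hmk1 : ∀ n, m n * P n + k n * Q n = r n := by
    intro n
    have h2 := hσ2 n
    simp only [hmdef, hkdef, hσdef] at h2 ⊢
    linear_combination (r n) * h2
  have hmk2 : ∀ n, m n * P (n+1) + k n * Q (n+1) = r (n+1) := by
    intro n
    have h2 := hσ2 n
    simp only [hmdef, hkdef, hσdef] at h2 ⊢
    linear_combination (r (n+1)) * h2
  -- real versions
  have hmk1R : ∀ n, (m n : ℝ) * p n + (k n : ℝ) * q n = (r n : ℝ) := by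
    intro n; rw [hP n, hQ n]; exact_mod_cast congrArg (fun z : ℤ => (z : ℝ)) (hmk1 n)
  have hmk2R : ∀ n, (m n : ℝ) * p (n+1) + (k n : ℝ) * q (n+1) = (r (n+1) : ℝ) := by
    intro n; rw [hP (n+1), hQ (n+1)]; exact_mod_cast congrArg (fun z : ℤ => (z : ℝ)) (hmk2 n)
  -- gamma relations
  have hQγ : ∀ n, q n * (β - (m n : ℝ) * α - (k n : ℝ)) =
      (q n * β - (r n : ℝ)) - (m n : ℝ) * (q n * α - p n) := by
    intro n; linear_combination - hmk1R n
  have hQγ' : ∀ n, q (n+1) * (β - (m n : ℝ) * α - (k n : ℝ)) =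
      (q (n+1) * β - (r (n+1) : ℝ)) - (m n : ℝ) * (q (n+1) * α - p (n+1)) := by
    intro n; linear_combination - hmk2R n
  have hσe : ∀ n, q n * (q (n+1) * α - p (n+1)) - q (n+1) * (q n * α - p n) = ((σ n : ℤ) : ℝ) := by
    intro n
    simp only [hσdef]; push_cast
    rw [← hP n, ← hP (n+1), ← hQ n, ← hQ (n+1)]; ring
  have hγ : ∀ n, (β - (m n : ℝ) * α - (k n : ℝ)) * ((σ n : ℤ) : ℝ) =
      (q (n+1) * α - p (n+1)) * (q n * β - (r n : ℝ))
        - (q n * α - p n) * (q (n+1) * β - (r (n+1) : ℝ)) := by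
    intro n
    linear_combination (q (n+1) * α - p (n+1)) * hQγ n - (q n * α - p n) * hQγ' n
      - (β - (m n : ℝ) * α - (k n : ℝ)) * hσe n
  have hmval : ∀ n, ((m n : ℤ) : ℝ) = ((σ n : ℤ) : ℝ) *
      (q n * (q (n+1) * β - (r (n+1) : ℝ)) - q (n+1) * (q n * β - (r n : ℝ))) := by
    intro n
    simp only [hmdef]; push_cast
    rw [← hQ n, ← hQ (n+1)]; ring
  -- abs values
  have hγabs : ∀ n, |β - (m n : ℝ) * α - (k n : ℝ)| =
      |(q (n+1) * α - p (n+1)) * (q n * β - (r n : ℝ))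
        - (q n * α - p n) * (q (n+1) * β - (r (n+1) : ℝ))| := by
    intro n
    rw [← hγ n, abs_mul, hσabs n, mul_one]
  have hmabs : ∀ n, |((m n : ℤ) : ℝ)| =
      |q n * (q (n+1) * β - (r (n+1) : ℝ)) - q (n+1) * (q n * β - (r n : ℝ))| := by
    intro n
    rw [hmval n, abs_mul, hσabs n, one_mul]
  -- elementary bounds on e
  have he2 : ∀ n, q n * |q (n+1) * α - p (n+1)| ≤ 1 := by
    intro n
    calc q n * |q (n+1) * α - p (n+1)| ≤ q (n+2) * |q (n+1) * α - p (n+1)| := by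
          apply mul_le_mul_of_nonneg_right ((hmono n).trans (hmono (n+1))) (abs_nonneg _)
      _ ≤ 1 := by rw [mul_comm]; exact (he (n+1)).le
  have he2' : ∀ n, q (n+1) * |q (n+1) * α - p (n+1)| ≤ 1 := by
    intro n
    calc q (n+1) * |q (n+1) * α - p (n+1)| ≤ q (n+2) * |q (n+1) * α - p (n+1)| := by
          apply mul_le_mul_of_nonneg_right (hmono (n+1)) (abs_nonneg _)
      _ ≤ 1 := by rw [mul_comm]; exact (he (n+1)).le
  -- bound on m
  have hmb : ∀ n, |((m n : ℤ) : ℝ)| < q n / 2 := by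
    intro n
    have hDn := hD n
    have hDn' := hD (n+1)
    have h1 : |((m n : ℤ) : ℝ)| ≤ q n * |q (n+1) * β - (r (n+1) : ℝ)|
        + q (n+1) * |q n * β - (r n : ℝ)| := by
      rw [hmabs n]
      calc |q n * (q (n+1) * β - (r (n+1) : ℝ)) - q (n+1) * (q n * β - (r n : ℝ))|
          ≤ |q n * (q (n+1) * β - (r (n+1) : ℝ))| + |q (n+1) * (q n * β - (r n : ℝ))| :=
            abs_sub _ _
        _ = q n * |q (n+1) * β - (r (n+1) : ℝ)| + q (n+1) * |q n * β - (r n : ℝ)| := by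
            rw [abs_mul, abs_mul, abs_of_pos (hqpos n), abs_of_pos (hqpos (n+1))]
    have h2 : q n * |q (n+1) * β - (r (n+1) : ℝ)| ≤ (1/4) * (q n * (q (n+1) * |q (n+1) * α - p (n+1)|)) := by
      calc q n * |q (n+1) * β - (r (n+1) : ℝ)| ≤ q n * ((1/4) * q (n+1) * |q (n+1) * α - p (n+1)|) :=
            mul_le_mul_of_nonneg_left hDn' (hqpos n).le
        _ = (1/4) * (q n * (q (n+1) * |q (n+1) * α - p (n+1)|)) := by ring
    have h3 : q (n+1) * |q n * β - (r n : ℝ)| ≤ (1/4) * (q n * (|q n * α - p n| * q (n+1))) := by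
      calc q (n+1) * |q n * β - (r n : ℝ)| ≤ q (n+1) * ((1/4) * q n * |q n * α - p n|) :=
            mul_le_mul_of_nonneg_left hDn (hqpos (n+1)).le
        _ = (1/4) * (q n * (|q n * α - p n| * q (n+1))) := by ring
    have h4 : q n * (q (n+1) * |q (n+1) * α - p (n+1)|) ≤ q n * 1 :=
      mul_le_mul_of_nonneg_left (he2' n) (hqpos n).le
    have h5 : q n * (|q n * α - p n| * q (n+1)) < q n * 1 :=
      mul_lt_mul_of_pos_left (he n) (hqpos n)
    nlinarith
  -- bound on gamma
  have hγb : ∀ n, |β - (m n : ℝ) * α - (k n : ℝ)| ≤ |q n * α - p n| / 2 := by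
    intro n
    have hDn := hD n
    have hDn' := hD (n+1)
    have h1 : |β - (m n : ℝ) * α - (k n : ℝ)| ≤
        |q (n+1) * α - p (n+1)| * |q n * β - (r n : ℝ)|
          + |q n * α - p n| * |q (n+1) * β - (r (n+1) : ℝ)| := by
      rw [hγabs n]
      calc |(q (n+1) * α - p (n+1)) * (q n * β - (r n : ℝ))
            - (q n * α - p n) * (q (n+1) * β - (r (n+1) : ℝ))|
          ≤ |(q (n+1) * α - p (n+1)) * (q n * β - (r n : ℝ))|
            + |(q n * α - p n) * (q (n+1) * β - (r (n+1) : ℝ))| := abs_sub _ _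
        _ = |q (n+1) * α - p (n+1)| * |q n * β - (r n : ℝ)|
            + |q n * α - p n| * |q (n+1) * β - (r (n+1) : ℝ)| := by rw [abs_mul, abs_mul]
    have h2 : |q (n+1) * α - p (n+1)| * |q n * β - (r n : ℝ)| ≤
        (1/4) * (|q n * α - p n| * (q n * |q (n+1) * α - p (n+1)|)) := by
      calc |q (n+1) * α - p (n+1)| * |q n * β - (r n : ℝ)|
          ≤ |q (n+1) * α - p (n+1)| * ((1/4) * q n * |q n * α - p n|) :=
            mul_le_mul_of_nonneg_left hDn (abs_nonneg _)
        _ = (1/4) * (|q n * α - p n| * (q n * |q (n+1) * α - p (n+1)|)) := by ring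
    have h3 : |q n * α - p n| * |q (n+1) * β - (r (n+1) : ℝ)| ≤
        (1/4) * (|q n * α - p n| * (q (n+1) * |q (n+1) * α - p (n+1)|)) := by
      calc |q n * α - p n| * |q (n+1) * β - (r (n+1) : ℝ)|
          ≤ |q n * α - p n| * ((1/4) * q (n+1) * |q (n+1) * α - p (n+1)|) :=
            mul_le_mul_of_nonneg_left hDn' (abs_nonneg _)
        _ = (1/4) * (|q n * α - p n| * (q (n+1) * |q (n+1) * α - p (n+1)|)) := by ring
    have h4 : |q n * α - p n| * (q n * |q (n+1) * α - p (n+1)|) ≤ |q n * α - p n| * 1 :=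
      mul_le_mul_of_nonneg_left (he2 n) (abs_nonneg _)
    have h5 : |q n * α - p n| * (q (n+1) * |q (n+1) * α - p (n+1)|) ≤ |q n * α - p n| * 1 :=
      mul_le_mul_of_nonneg_left (he2' n) (abs_nonneg _)
    linarith
  -- constancy
  have hstep : ∀ n, m (n+1) = m n ∧ k (n+1) = k n := by
    intro n
    have hidR : ((m (n+1) : ℝ) - (m n : ℝ)) * p (n+1) + ((k (n+1) : ℝ) - (k n : ℝ)) * q (n+1) = 0 := by
      linear_combination hQγ' n - hQγ (n+1)
    have hid : (m (n+1) - m n) * P (n+1) + (k (n+1) - k n) * Q (n+1) = 0 := by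
      have h := hidR
      rw [hP (n+1), hQ (n+1)] at h
      exact_mod_cast h
    have hcop : IsCoprime (Q (n+1)) (P (n+1)) := by
      rcases hσ1 n with h | h
      · exact ⟨P n, -(Q n), by simp only [hσdef] at h; linarith⟩
      · exact ⟨-(P n), Q n, by simp only [hσdef] at h; linarith⟩
    have hdvd : Q (n+1) ∣ (m (n+1) - m n) := by
      apply hcop.dvd_of_dvd_mul_right
      exact ⟨-(k (n+1) - k n), by linarith [hid]⟩
    have habs : |m (n+1) - m n| < Q (n+1) := by
      have h1 := hmb n
      have h2 := hmb (n+1)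
      have h3 : |((m (n+1) : ℝ)) - (m n : ℝ)| < q (n+1) := by
        calc |((m (n+1) : ℝ)) - (m n : ℝ)| ≤ |((m (n+1) : ℝ))| + |((m n : ℝ))| := abs_sub _ _
          _ < q (n+1) / 2 + q n / 2 := add_lt_add h2 h1
          _ ≤ q (n+1) := by linarith [hmono n]
      rw [hQ (n+1)] at h3
      exact_mod_cast h3
    have hm0 : m (n+1) - m n = 0 := by
      by_contra hne
      have hpos : 0 < |m (n+1) - m n| := abs_pos.mpr hne
      have hle := Int.le_of_dvd hpos ((dvd_abs _ _).mpr hdvd)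
      omega
    have hk0 : k (n+1) = k n := by
      have hz : (k (n+1) - k n) * Q (n+1) = 0 := by
        have := hid; rw [hm0] at this; linarith [this]
      have hQne : Q (n+1) ≠ 0 := by
        intro h0
        have := hq1 (n+1); rw [hQ (n+1), h0] at this; norm_num at this
      rcases mul_eq_zero.mp hz with h | h
      · omega
      · exact absurd h hQne
    exact ⟨by omega, hk0⟩
  have hconst : ∀ n, m n = m 0 ∧ k n = k 0 := by
    intro n
    induction n with
    | zero => exact ⟨rfl, rfl⟩
    | succ n ih => exact ⟨(hstep n).1.trans ih.1, (hstep n).2.trans ih.2⟩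
  -- conclusion
  refine ⟨m 0, k 0, ?_⟩
  by_contra hne
  have hc : β - (m 0 : ℝ) * α - (k 0 : ℝ) ≠ 0 := fun h0 => hne (by linarith)
  have hcpos : 0 < |β - (m 0 : ℝ) * α - (k 0 : ℝ)| := abs_pos.mpr hc
  obtain ⟨N, hN⟩ := exists_nat_gt (1 / |β - (m 0 : ℝ) * α - (k 0 : ℝ)|)
  have hNpos : (0:ℝ) < N := lt_trans (by positivity) hN
  set c := β - (m 0 : ℝ) * α - (k 0 : ℝ) with hcdef
  -- |c| ≤ |e (N+6)| / 2
  have h1 : |c| ≤ |q (N+6) * α - p (N+6)| / 2 := by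
    have := hγb (N+6)
    rw [(hconst (N+6)).1, (hconst (N+6)).2] at this
    exact this
  -- |e (N+6)| * N < 1
  have h2 : |q (N+6) * α - p (N+6)| * (N:ℝ) < 1 := by
    have hq7 : (N:ℝ) ≤ q (N+7) := by
      have hf := hfib (N+2)
      have : ((N+2 : ℕ):ℝ) ≤ q (N+7) := by convert hf using 3 <;> omega
      push_cast at this
      linarith
    calc |q (N+6) * α - p (N+6)| * (N:ℝ) ≤ |q (N+6) * α - p (N+6)| * q (N+7) :=
          mul_le_mul_of_nonneg_left hq7 (abs_nonneg _)
      _ < 1 := he (N+6)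
  have h3 : 1 < |c| * N := by
    rw [div_lt_iff₀ hcpos] at hN
    linarith
  nlinarith [abs_nonneg (q (N+6) * α - p (N+6))]

lemma cf_not_terminatedAt (α : ℝ) (hα : Irrational α) (n : ℕ) :
    ¬(GenContFract.of α).TerminatedAt n := by
  intro hterm
  obtain ⟨q, hq⟩ := (GenContFract.terminates_iff_rat α).mp ⟨n, hterm⟩
  exact hα ⟨q, hq.symm⟩

lemma cf_int_num_den (α : ℝ) (hα : Irrational α) (n : ℕ) :
    (∃ z : ℤ, (GenContFract.of α).nums n = (z : ℝ)) ∧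
      ∃ z : ℤ, (GenContFract.of α).dens n = (z : ℝ) := by
  have hs : ∀ j, ∃ gp : GenContFract.Pair ℝ, (GenContFract.of α).s.get? j = some gp :=
    fun j => Option.ne_none_iff_exists'.1 (cf_not_terminatedAt α hα j)
  induction n using Nat.strong_induction_on with
  | _ n ih =>
    match n, ih with
    | 0, _ =>
      refine ⟨⟨⌊α⌋, ?_⟩, ⟨1, ?_⟩⟩
      · rw [GenContFract.zeroth_num_eq_h, GenContFract.of_h_eq_floor]
      · rw [GenContFract.zeroth_den_eq_one]; norm_num
    | 1, _ =>
      obtain ⟨gp, hgp⟩ := hs 0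
      obtain ⟨b, hb⟩ := GenContFract.exists_int_eq_of_partDen (GenContFract.partDen_eq_s_b hgp)
      have ha : gp.a = 1 := GenContFract.of_partNum_eq_one (GenContFract.partNum_eq_s_a hgp)
      refine ⟨⟨b * ⌊α⌋ + 1, ?_⟩, ⟨b, ?_⟩⟩
      · rw [GenContFract.first_num_eq hgp, GenContFract.of_h_eq_floor, ha, hb]
        push_cast; ring
      · rw [GenContFract.first_den_eq hgp, hb]
    | (n+2), ih =>
      obtain ⟨gp, hgp⟩ := hs (n+1)
      obtain ⟨b, hb⟩ := GenContFract.exists_int_eq_of_partDen (GenContFract.partDen_eq_s_b hgp)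
      have ha : gp.a = 1 := GenContFract.of_partNum_eq_one (GenContFract.partNum_eq_s_a hgp)
      obtain ⟨⟨zp, hzp⟩, ⟨zq, hzq⟩⟩ := ih n (by omega)
      obtain ⟨⟨zp', hzp'⟩, ⟨zq', hzq'⟩⟩ := ih (n+1) (by omega)
      refine ⟨⟨b * zp' + zp, ?_⟩, ⟨b * zq' + zq, ?_⟩⟩
      · rw [GenContFract.nums_recurrence hgp hzp hzp', ha, hb]; push_cast; ring
      · rw [GenContFract.dens_recurrence hgp hzq hzq', ha, hb]; push_cast; ring

lemma cf_abs_lt (α : ℝ) (hα : Irrational α) (n : ℕ) :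
    |(GenContFract.of α).dens n * α - (GenContFract.of α).nums n| *
      (GenContFract.of α).dens (n+1) < 1 := by
  set g := GenContFract.of α with hg
  obtain ⟨⟨P, hP⟩, ⟨Q, hQ⟩⟩ := cf_int_num_den α hα n
  obtain ⟨⟨P', hP'⟩, ⟨Q', hQ'⟩⟩ := cf_int_num_den α hα (n+1)
  have hfib : ∀ j, ((Nat.fib (j+1) : ℕ) : ℝ) ≤ g.dens j := fun j =>
    GenContFract.succ_nth_fib_le_of_nth_den (Or.inr (cf_not_terminatedAt α hα _))
  have hq1 : ∀ j, (1:ℝ) ≤ g.dens j := by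
    intro j
    refine le_trans ?_ (hfib j)
    exact_mod_cast Nat.one_le_iff_ne_zero.mpr (Nat.fib_pos.mpr (Nat.succ_pos j)).ne'
  have hqpos : ∀ j, (0:ℝ) < g.dens j := fun j => lt_of_lt_of_le one_pos (hq1 j)
  have habs : |α - g.convs n| ≤ 1 / (g.dens n * g.dens (n+1)) :=
    GenContFract.abs_sub_convs_le (cf_not_terminatedAt α hα n)
  rw [GenContFract.conv_eq_num_div_den] at habs
  have hrw : α - g.nums n / g.dens n = (g.dens n * α - g.nums n) / g.dens n := by
    field_simp [(hqpos n).ne']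
  rw [hrw, abs_div, abs_of_pos (hqpos n)] at habs
  have hqq : (0:ℝ) < g.dens n * g.dens (n+1) := mul_pos (hqpos n) (hqpos (n+1))
  rw [div_le_div_iff₀ (hqpos n) hqq] at habs
  -- habs : |E| * (dens n * dens (n+1)) ≤ 1 * dens n
  have hle : |g.dens n * α - g.nums n| * g.dens (n+1) ≤ 1 := by
    have h := habs
    nlinarith [hqpos n, abs_nonneg (g.dens n * α - g.nums n)]
  rcases lt_or_eq_of_le hle with h | h
  · exact h
  exfalso
  have habs2 : |g.dens n * α - g.nums n| = 1 / g.dens (n+1) := by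
    rw [eq_div_iff (hqpos (n+1)).ne']
    exact h
  have hQpos : (0:ℝ) < (Q:ℝ) := by rw [← hQ]; exact hqpos n
  have hQ'pos : (0:ℝ) < (Q':ℝ) := by rw [← hQ']; exact hqpos (n+1)
  rcases (abs_eq (le_of_lt (div_pos one_pos (hqpos (n+1))))).mp habs2 with h2 | h2
  · rw [eq_div_iff (hqpos (n+1)).ne'] at h2
    -- (dens n * α - nums n) * dens (n+1) = 1
    rw [hP, hQ, hQ'] at h2
    apply hα
    refine ⟨((P * Q' + 1 : ℤ) : ℚ) / ((Q * Q' : ℤ) : ℚ), ?_⟩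
    have hα' : α = ((P * Q' + 1 : ℤ) : ℝ) / ((Q * Q' : ℤ) : ℝ) := by
      rw [eq_div_iff (by push_cast; positivity)]
      push_cast
      linarith [h2]
    rw [hα']
    push_cast
    ring
  · rw [show -(1 / g.dens (n+1)) = (-1) / g.dens (n+1) by ring, eq_div_iff (hqpos (n+1)).ne'] at h2
    rw [hP, hQ, hQ'] at h2
    apply hα
    refine ⟨((P * Q' - 1 : ℤ) : ℚ) / ((Q * Q' : ℤ) : ℚ), ?_⟩
    have hα' : α = ((P * Q' - 1 : ℤ) : ℝ) / ((Q * Q' : ℤ) : ℝ) := by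
      rw [eq_div_iff (by push_cast; positivity)]
      push_cast
      linarith [h2]
    rw [hα']
    push_cast
    ring


lemma cf_one_le (α : ℝ) (hα : Irrational α) (n : ℕ) : (1:ℝ) ≤ (GenContFract.of α).dens n := by
  refine le_trans ?_ (GenContFract.succ_nth_fib_le_of_nth_den
    (Or.inr (cf_not_terminatedAt α hα _)))
  exact_mod_cast Nat.one_le_iff_ne_zero.mpr (Nat.fib_pos.mpr (Nat.succ_pos n)).ne'

theorem stmt11 (α : ℝ) (hα : Irrational α) (hα01 : α ∈ Set.Ioo (0:ℝ) 1) (β : ℝ)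
    (h : ∃ n₀ : ℕ, ∀ n ≥ n₀,
      nint (contDen α n * β) ≤ (1/4) * contDen α n * nint (contDen α n * α)) :
    InZalphaZ α β := by
  obtain ⟨n₀, hn₀⟩ := h
  choose P hP using fun n => (cf_int_num_den α hα n).1
  choose Q hQ using fun n => (cf_int_num_den α hα n).2
  apply key_lemma α β (fun n => (GenContFract.of α).dens (n + n₀))
      (fun n => (GenContFract.of α).nums (n + n₀))
      (fun n => Q (n + n₀)) (fun n => P (n + n₀))
  · intro n; exact hQ (n + n₀)
  · intro n; exact hP (n + n₀)
  · intro n; exact cf_one_le α hα (n + n₀)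
  · intro n
    have e1 : n + 1 + n₀ = (n + n₀) + 1 := by omega
    rw [e1]
    exact GenContFract.of_den_mono (v := α) (n := n + n₀)
  · intro n
    have e1 : n + 5 + n₀ = (n + n₀) + 5 := by omega
    have hnat : n ≤ Nat.fib (n + 5 + n₀ + 1) := by
      calc n ≤ n + 6 := by omega
        _ ≤ Nat.fib (n + 6) := Nat.le_fib_self (by omega)
        _ ≤ Nat.fib (n + 5 + n₀ + 1) := Nat.fib_mono (by omega)
    calc (n : ℝ) ≤ (Nat.fib (n + 5 + n₀ + 1) : ℝ) := by exact_mod_cast hnat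
      _ ≤ (GenContFract.of α).dens (n + 5 + n₀) :=
          GenContFract.succ_nth_fib_le_of_nth_den (Or.inr (cf_not_terminatedAt α hα _))
  · intro n
    have e1 : n + 1 + n₀ = (n + n₀) + 1 := by omega
    rw [e1]
    have hd : (GenContFract.of α).nums (n + n₀) * (GenContFract.of α).dens (n + n₀ + 1) -
        (GenContFract.of α).dens (n + n₀) * (GenContFract.of α).nums (n + n₀ + 1) =
        (-1 : ℝ) ^ (n + n₀ + 1) :=
      (SimpContFract.of α).determinant (cf_not_terminatedAt α hα (n + n₀))
    rcases Nat.even_or_odd (n + n₀ + 1) with hpar | hpar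
    · left; rw [hd, hpar.neg_one_pow]
    · right; rw [hd, hpar.neg_one_pow]
  · intro n
    have e1 : n + 1 + n₀ = (n + n₀) + 1 := by omega
    rw [e1]
    exact cf_abs_lt α hα (n + n₀)
  · intro n
    have hh := hn₀ (n + n₀) (by omega)
    simp only [contDen, nint] at hh
    have hround : |(GenContFract.of α).dens (n + n₀) * α -
        (round ((GenContFract.of α).dens (n + n₀) * α) : ℝ)| ≤
        |(GenContFract.of α).dens (n + n₀) * α - (GenContFract.of α).nums (n + n₀)| := by
      rw [hP (n + n₀)]
      exact round_le ((GenContFract.of α).dens (n + n₀) * α) (P (n + n₀))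
    have hpos : (0:ℝ) ≤ (1/4) * (GenContFract.of α).dens (n + n₀) := by
      have := cf_one_le α hα (n + n₀); linarith
    calc |(GenContFract.of α).dens (n + n₀) * β -
          (round ((GenContFract.of α).dens (n + n₀) * β) : ℝ)|
        ≤ (1/4) * (GenContFract.of α).dens (n + n₀) *
          |(GenContFract.of α).dens (n + n₀) * α -
            (round ((GenContFract.of α).dens (n + n₀) * α) : ℝ)| := hh
      _ ≤ (1/4) * (GenContFract.of α).dens (n + n₀) *
          |(GenContFract.of α).dens (n + n₀) * α - (GenContFract.of α).nums (n + n₀)| := by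
          exact mul_le_mul_of_nonneg_left hround hpos
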